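/- Let A, A* be a Leonard pair on V. Then each of A and A* is multiplicity-free: it is diagonalizable and each of its eigenspaces has dimension one. -/

import Mathlib

open Matrix

/-- A square matrix (rows and columns indexed by `Fin n`) is irreducible tridiagonal
if its `(i,j)`-entry is zero whenever `|i−j| > 1` and nonzero whenever `|i−j| = 1`. -/
def IsIrredTridiagonal {F : Type*} [Field F] {n : ℕ}
    (A : Matrix (Fin n) (Fin n) F) : Prop :=
  (∀ i j : Fin n, ((i : ℕ) + 1 < (j : ℕ) ∨ (j : ℕ) + 1 < (i : ℕ)) → A i j = 0) ∧
  (∀ i j : Fin n, ((i : ℕ) + 1 = (j : ℕ) ∨ (j : ℕ) + 1 = (i : ℕ)) → A i j ≠ 0)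

/-- A pair of linear maps `A, A* : V → V` is a Leonard pair when there is a basis in which
`A` is represented by an irreducible tridiagonal matrix and `A*` by a diagonal one, and a
basis in which `A` is represented by a diagonal matrix and `A*` by an irreducible
tridiagonal one. -/
def IsLeonardPair {F V : Type*} [Field F] [AddCommGroup V] [Module F V] {N : ℕ}
    (_ : Module.finrank F V = N + 1) (A As : V →ₗ[F] V) : Prop :=
  (∃ b : Module.Basis (Fin (N + 1)) F V,
      IsIrredTridiagonal (LinearMap.toMatrix b b A) ∧
      (LinearMap.toMatrix b b As).IsDiag) ∧
  (∃ c : Module.Basis (Fin (N + 1)) F V,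
      (LinearMap.toMatrix c c A).IsDiag ∧
      IsIrredTridiagonal (LinearMap.toMatrix c c As))

/-- An endomorphism is multiplicity-free when it is diagonalizable (its eigenspaces span)
and each of its eigenspaces has dimension one. -/
def IsMultiplicityFree {F V : Type*} [Field F] [AddCommGroup V] [Module F V]
    (A : V →ₗ[F] V) : Prop :=
  ((⨆ μ : F, Module.End.eigenspace A μ) = ⊤) ∧
  (∀ μ : F, Module.End.HasEigenvalue A μ →
    Module.finrank F (Module.End.eigenspace A μ) = 1)

lemma tridiag_vec_zero {F : Type*} [Field F] {n : ℕ}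
    {T : Matrix (Fin (n+1)) (Fin (n+1)) F}
    (hT : IsIrredTridiagonal T) {μ : F} {x : Fin (n+1) → F}
    (hx : T.mulVec x = μ • x) (h0 : x 0 = 0) : x = 0 := by
  have key : ∀ k : ℕ, ∀ i : Fin (n+1), (i : ℕ) = k → x i = 0 := by
    intro k
    induction k using Nat.strong_induction_on with
    | _ k ih =>
      intro i hi
      rcases k with _ | k
      · have : i = 0 := Fin.ext (by simpa using hi)
        rwa [this]
      · have hk : k < n + 1 := by omega
        set i' : Fin (n+1) := ⟨k, hk⟩ with hi'
        have hxi' : x i' = 0 := ih k (by omega) i' rfl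
        have hrow : T.mulVec x i' = 0 := by
          rw [hx, Pi.smul_apply, hxi', smul_zero]
        have hsum : ∑ j, T i' j * x j = 0 := by
          simpa [Matrix.mulVec, dotProduct] using hrow
        have hmain : ∑ j, T i' j * x j = T i' i * x i := by
          apply Finset.sum_eq_single
          · intro j _ hj
            rcases le_or_gt (j : ℕ) k with hle | hgt
            · rw [ih j (by omega) j rfl, mul_zero]
            · have : (j : ℕ) ≠ k + 1 := fun hc => hj (Fin.ext (by omega))
              rw [hT.1 i' j (Or.inl (by simp [hi']; omega)), zero_mul]
          · intro hc
            exact absurd (Finset.mem_univ i) hc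
        have hne : T i' i ≠ 0 := hT.2 i' i (Or.inl (by simp [hi']; omega))
        have := hmain ▸ hsum
        exact (mul_eq_zero.mp this).resolve_left hne
  funext i
  exact key i i rfl

lemma eigenspace_finrank_le_one {F V : Type*} [Field F] [AddCommGroup V] [Module F V]
    {n : ℕ} (A : V →ₗ[F] V) (b : Module.Basis (Fin (n+1)) F V)
    (hT : IsIrredTridiagonal (LinearMap.toMatrix b b A)) (μ : F) :
    Module.finrank F (Module.End.eigenspace A μ) ≤ 1 := by
  set T := LinearMap.toMatrix b b A
  let φ : (Module.End.eigenspace A μ) →ₗ[F] F :=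
    (Finsupp.lapply 0).comp (b.repr.toLinearMap.comp (Module.End.eigenspace A μ).subtype)
  have hinj : Function.Injective φ := by
    rw [← LinearMap.ker_eq_bot, LinearMap.ker_eq_bot']
    intro v hv
    have hv0 : b.repr v.1 0 = 0 := hv
    have hAv : A v.1 = μ • v.1 := Module.End.mem_eigenspace_iff.mp v.2
    have hmv : T.mulVec (b.repr v.1) = μ • ⇑(b.repr v.1) := by
      rw [LinearMap.toMatrix_mulVec_repr, hAv, _root_.map_smul]
      simp [Finsupp.coe_smul]
    have := tridiag_vec_zero hT hmv hv0
    have : b.repr v.1 = 0 := by ext j; exact congrFun this j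
    have : v.1 = 0 := by
      have := congrArg b.repr.symm this
      simpa using this
    exact Subtype.ext this
  calc Module.finrank F (Module.End.eigenspace A μ) ≤ Module.finrank F F :=
        LinearMap.finrank_le_finrank_of_injective hinj
    _ = 1 := Module.finrank_self F

lemma diag_basis_eigen {F V : Type*} [Field F] [AddCommGroup V] [Module F V]
    {n : ℕ} (A : V →ₗ[F] V) (c : Module.Basis (Fin (n+1)) F V)
    (hc : (LinearMap.toMatrix c c A).IsDiag) (j : Fin (n+1)) :
    A (c j) = (LinearMap.toMatrix c c A) j j • c j := by
  conv_lhs => rw [← c.sum_repr (A (c j))]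
  rw [Finset.sum_eq_single j]
  · rw [← LinearMap.toMatrix_apply]
  · intro i _ hij
    rw [← LinearMap.toMatrix_apply, hc hij, zero_smul]
  · intro hc'
    exact absurd (Finset.mem_univ j) hc'

lemma multFree {F V : Type*} [Field F] [AddCommGroup V] [Module F V] {n : ℕ}
    (A : V →ₗ[F] V) (b c : Module.Basis (Fin (n+1)) F V)
    (hb : IsIrredTridiagonal (LinearMap.toMatrix b b A))
    (hc : (LinearMap.toMatrix c c A).IsDiag) :
    ((⨆ μ : F, Module.End.eigenspace A μ) = ⊤) ∧
    (∀ μ : F, Module.End.HasEigenvalue A μ →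
      Module.finrank F (Module.End.eigenspace A μ) = 1) := by
  have hfd : FiniteDimensional F V := Module.Finite.of_basis b
  constructor
  · apply le_antisymm le_top
    rw [← c.span_eq]
    apply Submodule.span_le.mpr
    rintro _ ⟨j, rfl⟩
    have : c j ∈ Module.End.eigenspace A ((LinearMap.toMatrix c c A) j j) :=
      Module.End.mem_eigenspace_iff.mpr (diag_basis_eigen A c hc j)
    exact Submodule.mem_iSup_of_mem _ this
  · intro μ hμ
    have h1 : 1 ≤ Module.finrank F (Module.End.eigenspace A μ) := by
      rw [Nat.one_le_iff_ne_zero]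
      intro h0
      have : Module.End.eigenspace A μ = ⊥ :=
        Submodule.finrank_eq_zero.mp h0
      exact hμ this
    exact le_antisymm (eigenspace_finrank_le_one A b hb μ) h1


/-- If `A, A*` is a Leonard pair on `V`, then each of `A` and `A*` is multiplicity-free. -/
theorem stmt18 (F V : Type*) [Field F] [AddCommGroup V] [Module F V]
    (N : ℕ) (hdim : Module.finrank F V = N + 1)
    (A As : V →ₗ[F] V) (h : IsLeonardPair hdim A As) :
    IsMultiplicityFree A ∧ IsMultiplicityFree As := by
  obtain ⟨⟨b, hbA, hbAs⟩, ⟨c, hcA, hcAs⟩⟩ := h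
  exact ⟨multFree A b c hbA hcA, multFree As c b hcAs hbAs⟩
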